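/- Let C ⊆ F_q^n be a linear code whose dual C^⊥ has minimum Hamming weight at least 3. If C^⊥ is completely regular with intersection array {b_0,…,b_{ρ−1}; c_1,…,c_ρ}, then the dual φ(C)^⊥ ⊆ F_p^{n₀n} of the concatenated image φ(C) is also completely regular with the same intersection array {b_0,…,b_{ρ−1}; c_1,…,c_ρ}. -/

import Mathlib

set_option linter.unusedSectionVars false

open Finset

/-- The dual of a code (as a set of words) with respect to the standard inner product. -/
def dualSet {F : Type*} [CommRing F] {ι : Type*} [Fintype ι] (C : Set (ι → F)) :
    Set (ι → F) :=
  {y | ∀ x ∈ C, ∑ i, x i * y i = 0}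

/-- Hamming distance from a word to a code. -/
noncomputable def distToCode {F ι : Type*} [Fintype ι] [DecidableEq F]
    (C : Set (ι → F)) (x : ι → F) : ℕ :=
  sInf {d | ∃ c ∈ C, hammingDist x c = d}

/-- A code is completely regular with covering radius `ρ` and intersection array
`{b 0, …, b (ρ-1); c 1, …, c ρ}`. -/
def IsCompletelyRegular {F ι : Type*} [Fintype ι] [DecidableEq F]
    (C : Set (ι → F)) (ρ : ℕ) (b c : ℕ → ℕ) : Prop :=
  (∀ x, distToCode C x ≤ ρ) ∧ (∃ x, distToCode C x = ρ) ∧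
    ∀ i ≤ ρ, ∀ x, distToCode C x = i →
      (i < ρ → {y | hammingDist x y = 1 ∧ distToCode C y = i + 1}.ncard = b i) ∧
      (1 ≤ i → {y | hammingDist x y = 1 ∧ distToCode C y = i - 1}.ncard = c i)

/- ############ auxiliary lemmas ############ -/

lemma hamnorm_prod {α β γ : Type*} [Fintype α] [Fintype β] [DecidableEq γ] [Zero γ]
    (f : α × β → γ) : hammingNorm f = ∑ a, hammingNorm (fun b => f (a, b)) := by
  classical
  simp only [hammingNorm, Finset.card_filter]
  rw [Fintype.sum_prod_type]

lemma hamnorm_single {β γ : Type*} [Fintype β] [DecidableEq β] [DecidableEq γ] [Zero γ]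
    (l : β) (c : γ) (hc : c ≠ 0) : hammingNorm (Pi.single l c : β → γ) = 1 := by
  classical
  have hf : (univ.filter fun i => (Pi.single l c : β → γ) i ≠ 0) = {l} := by
    ext i
    by_cases h : i = l <;> simp [h, Pi.single_apply, hc]
  unfold hammingNorm
  rw [hf, card_singleton]

lemma hamnorm_one_iff {β γ : Type*} [Fintype β] [DecidableEq β] [DecidableEq γ] [Zero γ]
    {u : β → γ} (hu : hammingNorm u = 1) : ∃ l c, c ≠ 0 ∧ u = (Pi.single l c : β → γ) := by
  classical
  obtain ⟨l0, hl0⟩ := Finset.card_eq_one.mp hu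
  have hmem : ∀ i, (u i ≠ 0) ↔ i = l0 := by
    intro i
    constructor
    · intro h
      have hi : i ∈ (univ.filter fun j => u j ≠ 0) := by simp [h]
      rw [hl0] at hi; simpa using hi
    · intro h
      have hi : i ∈ (univ.filter fun j => u j ≠ 0) := by rw [hl0]; simp [h]
      simpa using hi
  refine ⟨l0, u l0, (hmem l0).mpr rfl, funext fun i => ?_⟩
  by_cases h : i = l0
  · subst h; simp
  · rw [Pi.single_eq_of_ne h]
    by_contra h2
    exact h ((hmem i).mp h2)

lemma hamDist_eq_norm_sub {ι γ : Type*} [Fintype ι] [AddCommGroup γ] [DecidableEq γ]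
    (x y : ι → γ) : hammingDist x y = hammingNorm (x - y) := by
  rw [hammingDist_comm, hammingDist_eq_hammingNorm, neg_add_eq_sub]

section Main

variable (p k n₀ : ℕ) (hk : 1 ≤ k) (hcop : Nat.Coprime k (p - 1))
    (Fp Fq : Type) [Field Fp] [Field Fq] [Fintype Fp] [Fintype Fq]
    [DecidableEq Fp] [DecidableEq Fq] [Algebra Fp Fq]
    (hcp : Fintype.card Fp = p) (hcq : Fintype.card Fq = p ^ k)
    (hn₀ : n₀ = (p ^ k - 1) / (p - 1))
    (ξ : Fq) (hξ : orderOf ξ = n₀)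

include hcp in
lemma hp2 : 2 ≤ p := hcp ▸ Fintype.one_lt_card

include hk hcp hcq hn₀ in
lemma geom_nat : n₀ * (p - 1) = p ^ k - 1 ∧ 1 ≤ n₀ := by
  have h2 : 2 ≤ p := hp2 p Fp hcp
  have h1 : 1 ≤ p ^ k := Nat.one_le_pow _ _ (by omega)
  have hdvd : (p - 1) ∣ (p ^ k - 1) := by
    have := Nat.sub_dvd_pow_sub_pow p 1 k
    simpa using this
  have hmul : n₀ * (p - 1) = p ^ k - 1 := by
    rw [hn₀]; exact Nat.div_mul_cancel hdvd
  refine ⟨hmul, ?_⟩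
  have hpk : p - 1 ≤ p ^ k - 1 := by
    have : p ≤ p ^ k := Nat.le_self_pow (by omega) p
    omega
  rw [hn₀]
  exact Nat.one_le_div_iff (by omega) |>.mpr hpk

include hk hcop hcp hcq hn₀ in
lemma cop_n₀ : Nat.Coprime n₀ (p - 1) := by
  have h2 : 2 ≤ p := hp2 p Fp hcp
  have hgeo := (geom_nat p k n₀ hk Fp Fq hcp hcq hn₀).1
  -- n₀ = ∑ i in range k, p ^ i
  have hS : (∑ i ∈ Finset.range k, p ^ i) * (p - 1) = p ^ k - 1 := by
    have h1 : 1 ≤ p ^ k := Nat.one_le_pow _ _ (by omega)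
    zify [show 1 ≤ p by omega, h1]
    push_cast
    exact geom_sum_mul _ _
  have hn₀S : n₀ = ∑ i ∈ Finset.range k, p ^ i := by
    have : n₀ * (p - 1) = (∑ i ∈ Finset.range k, p ^ i) * (p - 1) := by rw [hgeo, hS]
    exact Nat.eq_of_mul_eq_mul_right (by omega) this
  have hmod : ∀ m : ℕ, (∑ i ∈ Finset.range m, p ^ i) ≡ m [MOD p - 1] := by
    intro m
    induction m with
    | zero => rfl
    | succ m ih =>
      rw [Finset.sum_range_succ]
      have hpm : p ^ m ≡ 1 [MOD p - 1] := by
        refine ((Nat.modEq_iff_dvd' (Nat.one_le_pow _ _ (by omega))).mpr ?_).symm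
        have := Nat.sub_dvd_pow_sub_pow p 1 m
        simpa using this
      exact ih.add hpm
  have hme : n₀ % (p - 1) = k % (p - 1) := by rw [hn₀S]; exact hmod k
  have : Nat.Coprime (p - 1) n₀ := by
    unfold Nat.Coprime
    rw [Nat.gcd_rec, hme, ← Nat.gcd_rec]
    exact (Nat.coprime_comm.mp hcop)
  exact Nat.coprime_comm.mp this

include hk hcop hcp hcq hn₀ hξ in
lemma key_inj : ∀ (c c' : Fp) (a b : Fin n₀), c ≠ 0 → c' ≠ 0 →
    algebraMap Fp Fq c * ξ ^ ((a : ℕ) + 1) = algebraMap Fp Fq c' * ξ ^ ((b : ℕ) + 1) →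
    c = c' ∧ a = b := by
  have h2 : 2 ≤ p := hp2 p Fp hcp
  have hgeo := geom_nat p k n₀ hk Fp Fq hcp hcq hn₀
  have hn1 : 1 ≤ n₀ := hgeo.2
  have hxne : ξ ≠ 0 := by
    intro h
    have := pow_orderOf_eq_one ξ
    rw [hξ, h, zero_pow (by omega)] at this
    exact zero_ne_one this
  have hcopn := cop_n₀ p k n₀ hk hcop Fp Fq hcp hcq hn₀
  intro c c' a b hc hc' heq
  have hu : algebraMap Fp Fq c ≠ 0 := by simpa using hc
  have hu' : algebraMap Fp Fq c' ≠ 0 := by simpa using hc'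
  set d : Fq := algebraMap Fp Fq c * (algebraMap Fp Fq c')⁻¹ with hd
  have hdd : d = ξ ^ ((b : ℕ) + 1) * (ξ ^ ((a : ℕ) + 1))⁻¹ := by
    rw [hd]
    field_simp
    linear_combination heq
  have hd1 : d ^ (p - 1) = 1 := by
    have hcpow : ∀ e : Fp, e ≠ 0 → (algebraMap Fp Fq e) ^ (p - 1) = 1 := by
      intro e he
      rw [← map_pow, ← hcp, FiniteField.pow_card_sub_one_eq_one e he, map_one]
    rw [hd, mul_pow, hcpow c hc, inv_pow, hcpow c' hc', inv_one, one_mul]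
  have hxn : ξ ^ n₀ = 1 := by rw [← hξ]; exact pow_orderOf_eq_one ξ
  have hd2 : d ^ n₀ = 1 := by
    rw [hdd, mul_pow, inv_pow, ← pow_mul, ← pow_mul, mul_comm ((b:ℕ)+1) n₀,
      mul_comm ((a:ℕ)+1) n₀, pow_mul, pow_mul, hxn, one_pow, one_pow, inv_one, mul_one]
  have hdord : orderOf d ∣ Nat.gcd n₀ (p - 1) :=
    Nat.dvd_gcd (orderOf_dvd_of_pow_eq_one hd2) (orderOf_dvd_of_pow_eq_one hd1)
  rw [hcopn] at hdord
  have hdone : d = 1 := orderOf_eq_one_iff.mp (Nat.dvd_one.mp hdord)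
  have hcc : algebraMap Fp Fq c = algebraMap Fp Fq c' := by
    rw [hd, ← div_eq_mul_inv] at hdone
    exact eq_of_div_eq_one hdone
  have hceq : c = c' := (algebraMap Fp Fq).injective hcc
  refine ⟨hceq, ?_⟩
  have hxx : ξ ^ ((a : ℕ) + 1) = ξ ^ ((b : ℕ) + 1) := by
    rw [hcc] at heq
    exact mul_left_cancel₀ hu' heq
  have hmm : ((a : ℕ) + 1) % n₀ = ((b : ℕ) + 1) % n₀ := by
    set ζ : Fqˣ := Units.mk0 ξ hxne with hζ
    have hxxu : ζ ^ ((a : ℕ) + 1) = ζ ^ ((b : ℕ) + 1) := by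
      ext
      push_cast [hζ]
      exact hxx
    have hordu : orderOf ζ = n₀ := by
      rw [hζ, ← hξ]
      exact (orderOf_units).symm.trans (by rw [Units.val_mk0])
    have := pow_inj_mod.mp hxxu
    rwa [hordu] at this
  have ha := a.isLt
  have hb := b.isLt
  have : (a : ℕ) = (b : ℕ) := by
    rcases Nat.lt_or_ge ((a : ℕ) + 1) n₀ with h1 | h1 <;>
      rcases Nat.lt_or_ge ((b : ℕ) + 1) n₀ with h2 | h2
    · rw [Nat.mod_eq_of_lt h1, Nat.mod_eq_of_lt h2] at hmm; omega
    · have hb1 : (b : ℕ) + 1 = n₀ := by omega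
      rw [Nat.mod_eq_of_lt h1, hb1, Nat.mod_self] at hmm; omega
    · have ha1 : (a : ℕ) + 1 = n₀ := by omega
      rw [ha1, Nat.mod_self, Nat.mod_eq_of_lt h2] at hmm; omega
    · omega
  exact Fin.ext this

include hk hcop hcp hcq hn₀ hξ in
lemma key_surj : ∀ α : Fq, α ≠ 0 →
    ∃ (cc : Fp) (l : Fin n₀), cc ≠ 0 ∧ algebraMap Fp Fq cc * ξ ^ ((l : ℕ) + 1) = α := by
  classical
  have h2 : 2 ≤ p := hp2 p Fp hcp
  have hgeo := geom_nat p k n₀ hk Fp Fq hcp hcq hn₀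
  have hxne : ξ ≠ 0 := by
    intro h
    have := pow_orderOf_eq_one ξ
    rw [hξ, h, zero_pow (by omega)] at this
    exact zero_ne_one this
  set g : {cc : Fp // cc ≠ 0} × Fin n₀ → {α : Fq // α ≠ 0} := fun x =>
    ⟨algebraMap Fp Fq x.1.1 * ξ ^ ((x.2 : ℕ) + 1),
      mul_ne_zero (by simpa using x.1.2) (pow_ne_zero _ hxne)⟩ with hg
  have hginj : Function.Injective g := by
    rintro ⟨⟨c1, hc1⟩, l1⟩ ⟨⟨c2, hc2⟩, l2⟩ h
    have := key_inj p k n₀ hk hcop Fp Fq hcp hcq hn₀ ξ hξ c1 c2 l1 l2 hc1 hc2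
      (Subtype.ext_iff.mp h)
    simp only [Prod.mk.injEq, Subtype.mk.injEq]
    exact ⟨this.1, this.2⟩
  have hcard1 : ∀ (K : Type) [Field K] [Fintype K] [DecidableEq K],
      Fintype.card {α : K // α ≠ 0} = Fintype.card K - 1 := by
    intro K _ _ _
    rw [← Fintype.card_units (α := K)]
    exact Fintype.card_congr ⟨fun x => Units.mk0 x.1 x.2, fun u => ⟨u.1, u.ne_zero⟩,
      fun x => rfl, fun u => Units.ext rfl⟩
  have hcards : Fintype.card ({cc : Fp // cc ≠ 0} × Fin n₀) = Fintype.card {α : Fq // α ≠ 0} := by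
    rw [Fintype.card_prod, hcard1 Fp, hcard1 Fq, Fintype.card_fin, hcp, hcq]
    rw [← hgeo.1]
    exact Nat.mul_comm _ _
  have hgbij : Function.Bijective g :=
    (Fintype.bijective_iff_injective_and_card g).mpr ⟨hginj, hcards⟩
  intro α hα
  obtain ⟨⟨⟨cc, hcc⟩, l⟩, hgl⟩ := hgbij.2 ⟨α, hα⟩
  exact ⟨cc, l, hcc, Subtype.ext_iff.mp hgl⟩

variable (n : ℕ)

end Main

/-- block evaluation map -/
def blkF {Fp Fq : Type} [Field Fp] [Field Fq] [Algebra Fp Fq] {n₀ : ℕ} (ξ : Fq)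
    (u : Fin n₀ → Fp) : Fq :=
  ∑ l, algebraMap Fp Fq (u l) * ξ ^ ((l : ℕ) + 1)

/-- the grouping map from `Fp^(n*n₀)` to `Fq^n` -/
def psiF {Fp Fq : Type} [Field Fp] [Field Fq] [Algebra Fp Fq] {n n₀ : ℕ} (ξ : Fq)
    (y : Fin n × Fin n₀ → Fp) : Fin n → Fq :=
  fun j => blkF ξ (fun l => y (j, l))

section Main2

variable (p k n₀ : ℕ) (hk : 1 ≤ k) (hcop : Nat.Coprime k (p - 1))
    (Fp Fq : Type) [Field Fp] [Field Fq] [Fintype Fp] [Fintype Fq]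
    [DecidableEq Fp] [DecidableEq Fq] [Algebra Fp Fq]
    (hcp : Fintype.card Fp = p) (hcq : Fintype.card Fq = p ^ k)
    (hn₀ : n₀ = (p ^ k - 1) / (p - 1))
    (ξ : Fq) (hξ : orderOf ξ = n₀)
    (n : ℕ)

include hk hcp hcq hn₀ hξ in
lemma xi_ne : ξ ≠ 0 := by
  have h2 : 2 ≤ p := hp2 p Fp hcp
  have hgeo := geom_nat p k n₀ hk Fp Fq hcp hcq hn₀
  intro h
  have := pow_orderOf_eq_one ξ
  rw [hξ, h, zero_pow (by omega)] at this
  exact zero_ne_one this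

lemma blk_zero : blkF ξ (0 : Fin n₀ → Fp) = 0 := by simp [blkF]

lemma blk_single (l : Fin n₀) (c : Fp) :
    blkF ξ (Pi.single l c : Fin n₀ → Fp) = algebraMap Fp Fq c * ξ ^ ((l : ℕ) + 1) := by
  unfold blkF
  rw [Finset.sum_eq_single l]
  · simp
  · intro b _ hb; rw [Pi.single_eq_of_ne hb, map_zero, zero_mul]
  · intro h; exact absurd (mem_univ l) h

include hk hcop hcp hcq hn₀ hξ in
lemma blk_lift : ∀ α : Fq, ∃ u : Fin n₀ → Fp,
    blkF ξ u = α ∧ hammingNorm u = if α = 0 then 0 else 1 := by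
  intro α
  by_cases hα : α = 0
  · exact ⟨0, by simp [blkF, hα], by simp [hα]⟩
  · obtain ⟨cc, l, hcc, hval⟩ := key_surj p k n₀ hk hcop Fp Fq hcp hcq hn₀ ξ hξ α hα
    refine ⟨Pi.single l cc, ?_, ?_⟩
    · rw [blk_single]; exact hval
    · rw [hamnorm_single l cc hcc, if_neg hα]

include hk hcop hcp hcq hn₀ hξ in
lemma blk_inj1 : ∀ u u' : Fin n₀ → Fp, hammingNorm u = 1 → hammingNorm u' = 1 →
    blkF ξ u = blkF ξ u' → u = u' := by
  intro u u' hu hu' heq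
  obtain ⟨l, c, hc, rfl⟩ := hamnorm_one_iff hu
  obtain ⟨l', c', hc', rfl⟩ := hamnorm_one_iff hu'
  rw [blk_single, blk_single] at heq
  obtain ⟨h1, h2⟩ := key_inj p k n₀ hk hcop Fp Fq hcp hcq hn₀ ξ hξ c c' l l' hc hc' heq
  rw [h1, h2]

lemma psi_apply (y : Fin n × Fin n₀ → Fp) (j : Fin n) :
    psiF ξ y j = blkF ξ (fun l => y (j, l)) := rfl

lemma psi_sub (y z : Fin n × Fin n₀ → Fp) :
    psiF (n := n) ξ (y - z) = psiF ξ y - psiF ξ z := by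
  funext j
  simp [psiF, blkF, map_sub, sub_mul, Finset.sum_sub_distrib]

lemma psi_norm_le (e : Fin n × Fin n₀ → Fp) :
    hammingNorm (psiF ξ e) ≤ hammingNorm e := by
  rw [hamnorm_prod e]
  unfold hammingNorm
  rw [Finset.card_filter]
  apply Finset.sum_le_sum
  intro j _
  by_cases h : psiF ξ e j ≠ 0
  · rw [if_pos h]
    refine Nat.one_le_iff_ne_zero.mpr fun hz => h ?_
    have hb : (fun l => e (j, l)) = 0 := hammingNorm_eq_zero.mp hz
    rw [psi_apply, hb, blk_zero]
  · rw [if_neg h]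
    exact Nat.zero_le _

include hk hcop hcp hcq hn₀ hξ in
lemma psi_lift : ∀ v : Fin n → Fq, ∃ e : Fin n × Fin n₀ → Fp,
    psiF ξ e = v ∧ hammingNorm e = hammingNorm v := by
  intro v
  choose u hu1 hu2 using blk_lift p k n₀ hk hcop Fp Fq hcp hcq hn₀ ξ hξ
  refine ⟨fun jl => u (v jl.1) jl.2, ?_, ?_⟩
  · funext j
    rw [psi_apply]
    exact hu1 (v j)
  · rw [hamnorm_prod]
    have h1 : ∀ j : Fin n, hammingNorm (fun l => u (v j) l) = if v j = 0 then 0 else 1 :=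
      fun j => hu2 (v j)
    rw [Finset.sum_congr rfl fun j _ => h1 j]
    unfold hammingNorm
    rw [Finset.card_filter]
    apply Finset.sum_congr rfl
    intro j _
    by_cases h : v j = 0 <;> simp [h]

include hk hcop hcp hcq hn₀ hξ in
lemma psi_single (e : Fin n × Fin n₀ → Fp) (he : hammingNorm e = 1) :
    ∃ (j : Fin n) (l : Fin n₀) (c : Fp), c ≠ 0 ∧ e = Pi.single (j, l) c ∧
      psiF ξ e = Pi.single j (algebraMap Fp Fq c * ξ ^ ((l : ℕ) + 1)) := by
  obtain ⟨⟨j, l⟩, c, hc, rfl⟩ := hamnorm_one_iff he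
  refine ⟨j, l, c, hc, rfl, ?_⟩
  funext j'
  by_cases h : j' = j
  · subst h
    rw [psi_apply, Pi.single_eq_same]
    have hb : (fun l' => (Pi.single (j', l) c : Fin n × Fin n₀ → Fp) (j', l')) =
        (Pi.single l c : Fin n₀ → Fp) := by
      funext l'
      simp [Pi.single_apply, Prod.ext_iff]
    rw [hb, blk_single]
  · rw [psi_apply, Pi.single_eq_of_ne h]
    have hb : (fun l' => (Pi.single (j, l) c : Fin n × Fin n₀ → Fp) (j', l')) =
        (0 : Fin n₀ → Fp) := by
      funext l'
      have : (j', l') ≠ (j, l) := by simp [Prod.ext_iff, h]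
      simp [Pi.single_eq_of_ne this]
    rw [hb, blk_zero]

include hk hcop hcp hcq hn₀ hξ in
lemma psi_w1 (e : Fin n × Fin n₀ → Fp) (he : hammingNorm e = 1) :
    hammingNorm (psiF ξ e) = 1 := by
  obtain ⟨j, l, c, hc, -, hpsi⟩ := psi_single p k n₀ hk hcop Fp Fq hcp hcq hn₀ ξ hξ n e he
  rw [hpsi]
  exact hamnorm_single _ _ (mul_ne_zero (by simpa using hc)
    (pow_ne_zero _ (xi_ne p k n₀ hk Fp Fq hcp hcq hn₀ ξ hξ)))

include hk hcop hcp hcq hn₀ hξ in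
lemma psi_inj1 (e e' : Fin n × Fin n₀ → Fp) (he : hammingNorm e = 1)
    (he' : hammingNorm e' = 1) (heq : psiF ξ e = psiF ξ e') : e = e' := by
  obtain ⟨j, l, c, hc, hes, hpsi⟩ := psi_single p k n₀ hk hcop Fp Fq hcp hcq hn₀ ξ hξ n e he
  obtain ⟨j', l', c', hc', hes', hpsi'⟩ := psi_single p k n₀ hk hcop Fp Fq hcp hcq hn₀ ξ hξ n e' he'
  have hxne := xi_ne p k n₀ hk Fp Fq hcp hcq hn₀ ξ hξ
  have hαne : algebraMap Fp Fq c * ξ ^ ((l : ℕ) + 1) ≠ 0 :=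
    mul_ne_zero (by simpa using hc) (pow_ne_zero _ hxne)
  rw [hpsi, hpsi'] at heq
  have hj : j = j' := by
    by_contra hne
    have := congrFun heq j
    rw [Pi.single_eq_same, Pi.single_eq_of_ne hne] at this
    exact hαne this
  subst hj
  have hval : algebraMap Fp Fq c * ξ ^ ((l : ℕ) + 1)
      = algebraMap Fp Fq c' * ξ ^ ((l' : ℕ) + 1) := by
    have := congrFun heq j
    rwa [Pi.single_eq_same, Pi.single_eq_same] at this
  obtain ⟨h1, h2⟩ := key_inj p k n₀ hk hcop Fp Fq hcp hcq hn₀ ξ hξ c c' l l' hc hc' hval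
  rw [hes, hes', h1, h2]

include hk hcop hcp hcq hn₀ hξ in
lemma psi_surj_w1 (v : Fin n → Fq) (hv : hammingNorm v = 1) :
    ∃ e : Fin n × Fin n₀ → Fp, hammingNorm e = 1 ∧ psiF ξ e = v := by
  obtain ⟨e, he1, he2⟩ := psi_lift p k n₀ hk hcop Fp Fq hcp hcq hn₀ ξ hξ n v
  exact ⟨e, by rw [he2, hv], he1⟩

include hk hcop hcp hcq hn₀ hξ in
lemma dist_transfer (D : Set (Fin n → Fq)) (hD : D.Nonempty) (x : Fin n × Fin n₀ → Fp) :
    distToCode ((psiF ξ) ⁻¹' D) x = distToCode D (psiF ξ x) := by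
  set S := {d | ∃ c' ∈ (psiF (n := n) (n₀ := n₀) ξ) ⁻¹' D, hammingDist x c' = d} with hS
  set T := {d | ∃ cD ∈ D, hammingDist (psiF ξ x) cD = d} with hT
  have hTS : T ⊆ S := by
    rintro d ⟨cD, hcD, rfl⟩
    obtain ⟨e, he1, he2⟩ := psi_lift p k n₀ hk hcop Fp Fq hcp hcq hn₀ ξ hξ n (psiF ξ x - cD)
    refine ⟨x - e, ?_, ?_⟩
    · show psiF ξ (x - e) ∈ D
      rw [psi_sub, he1, sub_sub_cancel]
      exact hcD
    · rw [hamDist_eq_norm_sub, hamDist_eq_norm_sub, sub_sub_cancel, he2]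
  have hSge : ∀ d ∈ S, ∃ t ∈ T, t ≤ d := by
    rintro d ⟨c', hc', rfl⟩
    refine ⟨hammingDist (psiF ξ x) (psiF ξ c'), ⟨psiF ξ c', hc', rfl⟩, ?_⟩
    rw [hamDist_eq_norm_sub, hamDist_eq_norm_sub, ← psi_sub]
    exact psi_norm_le n₀ Fp Fq ξ n _
  have hTne : T.Nonempty := by
    obtain ⟨cD, hcD⟩ := hD
    exact ⟨_, cD, hcD, rfl⟩
  have hSne : S.Nonempty := by
    obtain ⟨t, ht⟩ := hTne
    exact ⟨t, hTS ht⟩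
  show sInf S = sInf T
  apply le_antisymm
  · exact Nat.sInf_le (hTS (Nat.sInf_mem hTne))
  · obtain ⟨t, htT, htle⟩ := hSge _ (Nat.sInf_mem hSne)
    exact le_trans (Nat.sInf_le htT) htle

include hk hcop hcp hcq hn₀ hξ in
lemma count_transfer (D : Set (Fin n → Fq)) (hD : D.Nonempty) (x : Fin n × Fin n₀ → Fp)
    (m : ℕ) :
    {y | hammingDist x y = 1 ∧ distToCode ((psiF ξ) ⁻¹' D) y = m}.ncard
      = {z | hammingDist (psiF ξ x) z = 1 ∧ distToCode D z = m}.ncard := by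
  have hrw : {y | hammingDist x y = 1 ∧ distToCode ((psiF ξ) ⁻¹' D) y = m}
      = {y | hammingDist x y = 1 ∧ distToCode D (psiF ξ y) = m} := by
    ext y
    rw [Set.mem_setOf_eq, Set.mem_setOf_eq,
      dist_transfer p k n₀ hk hcop Fp Fq hcp hcq hn₀ ξ hξ n D hD y]
  rw [hrw]
  set S := {y | hammingDist x y = 1 ∧ distToCode D (psiF ξ y) = m} with hSdef
  set T := {z | hammingDist (psiF ξ x) z = 1 ∧ distToCode D z = m} with hTdef
  have himg : (psiF ξ) '' S = T := by
    ext z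
    constructor
    · rintro ⟨y, ⟨hy1, hy2⟩, rfl⟩
      refine ⟨?_, hy2⟩
      rw [hamDist_eq_norm_sub, ← psi_sub]
      refine psi_w1 p k n₀ hk hcop Fp Fq hcp hcq hn₀ ξ hξ n _ ?_
      rw [← hamDist_eq_norm_sub]
      exact hy1
    · rintro ⟨hz1, hz2⟩
      have h1 : hammingNorm (psiF ξ x - z) = 1 := by
        rw [← hamDist_eq_norm_sub]; exact hz1
      obtain ⟨e, he1, he2⟩ := psi_surj_w1 p k n₀ hk hcop Fp Fq hcp hcq hn₀ ξ hξ n _ h1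
      have hz : psiF ξ (x - e) = z := by rw [psi_sub, he2, sub_sub_cancel]
      refine ⟨x - e, ⟨?_, ?_⟩, hz⟩
      · rw [hamDist_eq_norm_sub, sub_sub_cancel]; exact he1
      · rw [hz]; exact hz2
  have hinj : Set.InjOn (psiF ξ) S := by
    rintro y ⟨hy1, -⟩ y' ⟨hy1', -⟩ heq
    have h1 : hammingNorm (x - y) = 1 := by rw [← hamDist_eq_norm_sub]; exact hy1
    have h1' : hammingNorm (x - y') = 1 := by rw [← hamDist_eq_norm_sub]; exact hy1'
    have h2 : psiF ξ (x - y) = psiF ξ (x - y') := by rw [psi_sub, psi_sub, heq]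
    have h3 := psi_inj1 p k n₀ hk hcop Fp Fq hcp hcq hn₀ ξ hξ n _ _ h1 h1' h2
    exact sub_right_injective h3
  rw [← himg]
  exact (Set.ncard_image_of_injOn hinj).symm

include hk hcop hcp hcq hn₀ hξ in
lemma dual_eq (C : Submodule Fq (Fin n → Fq))
    (Φ : (Fin n → Fq) → (Fin n × Fin n₀ → Fp))
    (hΦ : ∀ (v : Fin n → Fq) (jl : Fin n × Fin n₀),
      Φ v jl = Algebra.trace Fp Fq (v jl.1 * ξ ^ ((jl.2 : ℕ) + 1))) :
    dualSet (Φ '' (C : Set (Fin n → Fq))) = (psiF ξ) ⁻¹' (dualSet (C : Set (Fin n → Fq))) := by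
  have : FiniteDimensional Fp Fq := Module.Finite.of_finite
  have hkey : ∀ (v : Fin n → Fq) (y : Fin n × Fin n₀ → Fp),
      ∑ i, Φ v i * y i = Algebra.trace Fp Fq (∑ j, v j * psiF ξ y j) := by
    intro v y
    rw [Fintype.sum_prod_type]
    rw [map_sum]
    apply Finset.sum_congr rfl
    intro j _
    have hterm : ∀ l : Fin n₀, Φ v (j, l) * y (j, l)
        = Algebra.trace Fp Fq (y (j, l) • (v j * ξ ^ ((l : ℕ) + 1))) := by
      intro l
      rw [hΦ, LinearMap.map_smul, smul_eq_mul, mul_comm]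
    rw [Finset.sum_congr rfl fun l _ => hterm l, ← map_sum]
    congr 1
    rw [psi_apply]
    unfold blkF
    rw [Finset.mul_sum]
    apply Finset.sum_congr rfl
    intro l _
    rw [Algebra.smul_def]
    ring
  ext y
  constructor
  · intro hy
    show psiF ξ y ∈ dualSet (C : Set (Fin n → Fq))
    intro v hv
    by_contra hs
    set s := ∑ j, v j * psiF ξ y j with hsdef
    have htr : Algebra.trace Fp Fq ≠ 0 := Algebra.trace_ne_zero Fp Fq
    obtain ⟨t, ht⟩ := DFunLike.ne_iff.mp htr
    have ht' : Algebra.trace Fp Fq t ≠ 0 := by simpa using ht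
    have hv' : (t * s⁻¹) • v ∈ (C : Set (Fin n → Fq)) := C.smul_mem _ hv
    have h0 := hy (Φ ((t * s⁻¹) • v)) ⟨_, hv', rfl⟩
    rw [hkey] at h0
    have hsum : ∑ j, ((t * s⁻¹) • v) j * psiF ξ y j = t := by
      have : ∀ j, ((t * s⁻¹) • v) j * psiF ξ y j = (t * s⁻¹) * (v j * psiF ξ y j) := by
        intro j; simp [mul_assoc]
      rw [Finset.sum_congr rfl fun j _ => this j, ← Finset.mul_sum, ← hsdef]
      field_simp
    rw [hsum] at h0
    exact ht' h0
  · intro hy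
    rintro w ⟨v, hv, rfl⟩
    rw [hkey]
    have : ∑ j, v j * psiF ξ y j = 0 := hy v hv
    rw [this, map_zero]

end Main2

/-- Let `C ⊆ F_q^n` be a linear code whose dual `C^⊥` has minimum Hamming
weight at least `3`.  If `C^⊥` is completely regular with intersection array
`{b_0,…,b_{ρ−1}; c_1,…,c_ρ}`, then the dual `φ(C)^⊥ ⊆ F_p^{n₀·n}` of the concatenated
image `φ(C)` is also completely regular with the same intersection array. -/
theorem stmt_4 (p k n₀ : ℕ) (hk : 1 ≤ k) (hcop : Nat.Coprime k (p - 1))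
    (Fp Fq : Type) [Field Fp] [Field Fq] [Fintype Fp] [Fintype Fq]
    [DecidableEq Fp] [DecidableEq Fq] [Algebra Fp Fq]
    (hcp : Fintype.card Fp = p) (hcq : Fintype.card Fq = p ^ k)
    (hn₀ : n₀ = (p ^ k - 1) / (p - 1))
    (ξ : Fq) (hξ : orderOf ξ = n₀)
    (n : ℕ) (hn : 1 ≤ n)
    (Φ : (Fin n → Fq) → (Fin n × Fin n₀ → Fp))
    (hΦ : ∀ (v : Fin n → Fq) (jl : Fin n × Fin n₀),
      Φ v jl = Algebra.trace Fp Fq (v jl.1 * ξ ^ ((jl.2 : ℕ) + 1)))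
    (C : Submodule Fq (Fin n → Fq))
    (hdist : ∀ w ∈ dualSet (C : Set (Fin n → Fq)), w ≠ 0 → 3 ≤ hammingNorm w)
    (ρ : ℕ) (b c : ℕ → ℕ)
    (hCR : IsCompletelyRegular (dualSet (C : Set (Fin n → Fq))) ρ b c) :
    IsCompletelyRegular (dualSet (Φ '' (C : Set (Fin n → Fq)))) ρ b c := by
  classical
  set D := dualSet (C : Set (Fin n → Fq)) with hDdef
  have hDne : D.Nonempty := ⟨0, fun x _ => by simp⟩
  have hdual := dual_eq p k n₀ hk hcop Fp Fq hcp hcq hn₀ ξ hξ n C Φ hΦ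
  rw [hdual]
  obtain ⟨h1, h2, h3⟩ := hCR
  refine ⟨?_, ?_, ?_⟩
  · intro x
    rw [dist_transfer p k n₀ hk hcop Fp Fq hcp hcq hn₀ ξ hξ n D hDne x]
    exact h1 _
  · obtain ⟨x₀, hx₀⟩ := h2
    obtain ⟨e, he1, -⟩ := psi_lift p k n₀ hk hcop Fp Fq hcp hcq hn₀ ξ hξ n x₀
    refine ⟨e, ?_⟩
    rw [dist_transfer p k n₀ hk hcop Fp Fq hcp hcq hn₀ ξ hξ n D hDne e, he1]
    exact hx₀
  · intro i hi x hx
    rw [dist_transfer p k n₀ hk hcop Fp Fq hcp hcq hn₀ ξ hξ n D hDne x] at hx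
    obtain ⟨hb, hc⟩ := h3 i hi (psiF ξ x) hx
    constructor
    · intro hlt
      rw [count_transfer p k n₀ hk hcop Fp Fq hcp hcq hn₀ ξ hξ n D hDne x (i + 1)]
      exact hb hlt
    · intro hge
      rw [count_transfer p k n₀ hk hcop Fp Fq hcp hcq hn₀ ξ hξ n D hDne x (i - 1)]
      exact hc hge
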